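/- Let k : ω → ω be a total computable function such that the set E := {x : k(x) ≠ x} is infinite. Then there is a computable strictly increasing sequence (x_n)_{n∈ω} of elements of E with x_n > max{x_i, k(x_i) : i < n} for all n, and the sets U_n := {A ∈ 2^ω : ∀ i < n, A(x_i) = A(k(x_i))} form a uniformly computable sequence of clopen subsets of Cantor space with μ(U_n) = 2^{-n} for all n and Fix(k) ⊆ ⋂_n U_n, where Fix(k) := {A ∈ 2^ω : ∀x, A(x) = A(k(x))}. In particular, (U_n) is a Martin-Löf test covering Fix(k). -/

import Mathlib

open MeasureTheory

/-- The cylinder of binary sequences extending the finite string `σ`. -/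
def cylinder (σ : List Bool) : Set (ℕ → Bool) :=
  {X | ∀ i, i < σ.length → X i = σ.getD i false}

/-- `μ` is the fair-coin product measure on Cantor space:
each cylinder `[σ]` has measure `2^{-|σ|}`. -/
def IsFairCoin (μ : Measure (ℕ → Bool)) : Prop :=
  ∀ σ : List Bool, μ (cylinder σ) = (1 / 2 : ENNReal) ^ σ.length

/-- `(U n)` is a Martin-Löf test w.r.t. `μ`: a uniformly c.e. sequence of open
sets (each `U n` is the union of the cylinders over a uniformly c.e. set of
strings) with `μ (U n) ≤ 2^{-n}`. -/
def MLTest (μ : Measure (ℕ → Bool)) (U : ℕ → Set (ℕ → Bool)) : Prop :=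
  (∃ W : ℕ → List Bool → Prop,
      REPred (fun p : ℕ × List Bool => W p.1 p.2) ∧
      ∀ n, U n = ⋃ σ ∈ {σ | W n σ}, cylinder σ) ∧
  ∀ n, μ (U n) ≤ (1 / 2 : ENNReal) ^ n

namespace Stmt11

lemma cylinder_nil : _root_.cylinder [] = Set.univ := by
  ext A; simp only [Set.mem_univ, iff_true]; intro i hi; simp at hi

lemma mem_cylinder_append {σ : List Bool} {b : Bool} {A : ℕ → Bool} :
    A ∈ _root_.cylinder (σ ++ [b]) ↔ A ∈ _root_.cylinder σ ∧ A σ.length = b := by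
  constructor
  · intro h
    refine ⟨fun i hi => ?_, ?_⟩
    · have := h i (by simp; omega)
      rwa [List.getD_append _ _ _ _ hi] at this
    · have := h σ.length (by simp)
      rwa [List.getD_append_right _ _ _ _ le_rfl, Nat.sub_self] at this
  · rintro ⟨h1, h2⟩ i hi
    simp only [List.length_append, List.length_cons, List.length_nil] at hi
    rcases Nat.lt_or_ge i σ.length with h | h
    · rw [List.getD_append _ _ _ _ h]; exact h1 i h
    · have : i = σ.length := by omega
      subst this
      rw [List.getD_append_right _ _ _ _ le_rfl, Nat.sub_self]
      exact h2

lemma cylinder_split (σ : List Bool) :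
    _root_.cylinder σ = _root_.cylinder (σ ++ [false]) ∪ _root_.cylinder (σ ++ [true]) := by
  ext A
  simp only [Set.mem_union, mem_cylinder_append]
  cases h : A σ.length <;> tauto

lemma measurableSet_cylinder (σ : List Bool) : MeasurableSet (_root_.cylinder σ) := by
  have : _root_.cylinder σ = ⋂ i ∈ Finset.range σ.length, (fun A : ℕ → Bool => A i) ⁻¹' {σ.getD i false} := by
    ext A
    simp only [Set.mem_iInter, Finset.mem_range, Set.mem_preimage, Set.mem_singleton_iff]
    rfl
  rw [this]
  exact MeasurableSet.biInter (Set.to_countable _)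
    (fun i _ => (measurable_pi_apply i) (measurableSet_singleton _))

lemma cylinder_disjoint {σ τ : List Bool} (hl : σ.length = τ.length) (hne : σ ≠ τ) :
    Disjoint (_root_.cylinder σ) (_root_.cylinder τ) := by
  rw [Set.disjoint_left]
  intro A hσ hτ
  apply hne
  apply List.ext_getElem hl
  intro i h1 h2
  have e1 := hσ i h1
  have e2 := hτ i h2
  rw [List.getD_eq_getElem _ _ h1] at e1
  rw [List.getD_eq_getElem _ _ h2] at e2
  rw [← e1, ← e2]

lemma cylinder_inter_eq {σ : List Bool} {p q : ℕ} (hp : σ.length = p) (hq : q < p) :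
    _root_.cylinder σ ∩ {A | A p = A q} = _root_.cylinder (σ ++ [σ.getD q false]) := by
  subst hp
  ext A
  rw [Set.mem_inter_iff, mem_cylinder_append]
  constructor
  · rintro ⟨h1, h2⟩
    exact ⟨h1, by rw [Set.mem_setOf_eq] at h2; rw [h2, h1 q hq]⟩
  · rintro ⟨h1, h2⟩
    exact ⟨h1, by rw [Set.mem_setOf_eq, h2, h1 q hq]⟩

/-- extend each string in `T` by `j` arbitrary bits -/
def extFin (T : Finset (List Bool)) : ℕ → Finset (List Bool)
  | 0 => T
  | j+1 => ((extFin T j).image (· ++ [false])) ∪ ((extFin T j).image (· ++ [true]))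

lemma extFin_length {T : Finset (List Bool)} {L : ℕ} (hT : ∀ σ ∈ T, σ.length = L) :
    ∀ j, ∀ σ ∈ extFin T j, σ.length = L + j := by
  intro j
  induction j with
  | zero => simpa [extFin] using hT
  | succ j ih =>
    intro σ hσ
    simp only [extFin, Finset.mem_union, Finset.mem_image] at hσ
    rcases hσ with ⟨τ, hτ, rfl⟩ | ⟨τ, hτ, rfl⟩ <;>
      simp [ih τ hτ, Nat.add_assoc]

lemma extFin_biUnion (T : Finset (List Bool)) :
    ∀ j, (⋃ σ ∈ extFin T j, _root_.cylinder σ) = ⋃ σ ∈ T, _root_.cylinder σ := by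
  intro j
  induction j with
  | zero => rfl
  | succ j ih =>
    rw [← ih]
    ext A
    simp only [extFin, Finset.set_biUnion_union, Finset.set_biUnion_finset_image,
      Set.mem_union, Set.mem_iUnion]
    constructor
    · rintro (⟨σ, hσ, h⟩ | ⟨σ, hσ, h⟩)
      · exact ⟨σ, hσ, (cylinder_split σ) ▸ Or.inl h⟩
      · exact ⟨σ, hσ, (cylinder_split σ) ▸ Or.inr h⟩
    · rintro ⟨σ, hσ, h⟩
      rw [cylinder_split σ] at h
      rcases h with h | h
      · exact Or.inl ⟨σ, hσ, h⟩
      · exact Or.inr ⟨σ, hσ, h⟩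

lemma extFin_card (T : Finset (List Bool)) : ∀ j, (extFin T j).card = T.card * 2 ^ j := by
  intro j
  induction j with
  | zero => simp [extFin]
  | succ j ih =>
    have hinj : ∀ b : Bool, Function.Injective (fun σ : List Bool => σ ++ [b]) := by
      intro b σ τ h
      simpa using (List.append_inj' h rfl).1
    have hdisj : Disjoint ((extFin T j).image (· ++ [false])) ((extFin T j).image (· ++ [true])) := by
      rw [Finset.disjoint_left]
      rintro a ha hb
      simp only [Finset.mem_image] at ha hb
      obtain ⟨σ, _, rfl⟩ := ha
      obtain ⟨τ, _, h⟩ := hb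
      have := (List.append_inj' h rfl).2
      simp at this
    rw [extFin, Finset.card_union_of_disjoint hdisj,
      Finset.card_image_of_injective _ (hinj false),
      Finset.card_image_of_injective _ (hinj true), ih]
    ring

lemma measure_rep {μ : Measure (ℕ → Bool)} (hμ : IsFairCoin μ) (T : Finset (List Bool)) (L : ℕ)
    (hL : ∀ σ ∈ T, σ.length = L) :
    μ (⋃ σ ∈ T, _root_.cylinder σ) = T.card * (1 / 2 : ENNReal) ^ L := by
  rw [measure_biUnion_finset ?_ (fun σ _ => measurableSet_cylinder σ)]
  · rw [Finset.sum_congr rfl (fun σ hσ => by rw [hμ σ, hL σ hσ])]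
    simp [Finset.sum_const, nsmul_eq_mul]
  · intro σ hσ τ hτ hne
    exact cylinder_disjoint ((hL σ hσ).trans (hL τ hτ).symm) hne

end Stmt11

/-- For a total computable `k` with `E := {x | k x ≠ x}` infinite, there is a
computable strictly increasing sequence `(x_n)` in `E` with
`x_n > max {x_i, k x_i : i < n}`, such that the clopen sets
`U_n := {A | ∀ i < n, A (x_i) = A (k (x_i))}` satisfy `μ (U_n) = 2^{-n}` and
`Fix(k) ⊆ ⋂ₙ U_n`; in particular `(U_n)` is a Martin-Löf test covering
`Fix(k)`. -/
theorem stmt_11 (k : ℕ → ℕ) (hk : Computable k)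
    (hE : {x | k x ≠ x}.Infinite)
    (μ : Measure (ℕ → Bool)) (hμ : IsFairCoin μ) :
    ∃ x : ℕ → ℕ, Computable x ∧ StrictMono x ∧
      (∀ n, k (x n) ≠ x n) ∧
      (∀ n i, i < n → x i < x n ∧ k (x i) < x n) ∧
      (∀ n, IsClopen {A : ℕ → Bool | ∀ i < n, A (x i) = A (k (x i))}) ∧
      (∀ n, μ {A : ℕ → Bool | ∀ i < n, A (x i) = A (k (x i))}
          = (1 / 2 : ENNReal) ^ n) ∧
      ({A : ℕ → Bool | ∀ y, A y = A (k y)}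
          ⊆ ⋂ n, {A : ℕ → Bool | ∀ i < n, A (x i) = A (k (x i))}) ∧
      MLTest μ (fun n => {A : ℕ → Bool | ∀ i < n, A (x i) = A (k (x i))}) := by
  classical
  have hEx : ∀ b : ℕ, ∃ m : ℕ, k (b + 1 + m) ≠ (b + 1 + m) := by
    intro b
    obtain ⟨y, hy, hlt⟩ := hE.exists_gt b
    refine ⟨y - (b + 1), ?_⟩
    have h : b + 1 + (y - (b + 1)) = y := by omega
    rw [h]; exact hy
  set g : ℕ → ℕ := fun b => b + 1 + Nat.find (hEx b) with hg_def
  have hgk : ∀ b, k (g b) ≠ g b := fun b => Nat.find_spec (hEx b)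
  have hgb : ∀ b, b < g b := fun b => by simp only [hg_def]; omega
  -- computability of g
  have hadd : Computable fun p : ℕ × ℕ => p.1 + 1 + p.2 :=
    (Primrec.nat_add.comp (Primrec.nat_add.comp Primrec.fst (Primrec.const 1)) Primrec.snd).to_comp
  have hfool : Computable fun p : ℕ × ℕ => !(k (p.1 + 1 + p.2) == (p.1 + 1 + p.2)) := by
    have h2 : Computable fun p : ℕ × ℕ => k (p.1 + 1 + p.2) := hk.comp hadd
    have h3 : Computable₂ fun a b : ℕ => a == b := Primrec.beq.to_comp
    exact Primrec.not.to_comp.comp (h3.comp h2 hadd)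
  have hgc : Computable g := by
    have hp : Partrec fun b : ℕ =>
        (Nat.rfind (fun m => Part.some (!(k (b + 1 + m) == (b + 1 + m))))).map
          (fun m => b + 1 + m) := by
      refine Partrec.map (Partrec.rfind ?_) hadd.to₂
      exact (Computable₂.partrec₂ (hfool : Computable₂ fun b m : ℕ => !(k (b + 1 + m) == (b + 1 + m))))
    apply hp.of_eq_tot
    intro b
    rw [Part.mem_map_iff]
    refine ⟨Nat.find (hEx b), ?_, rfl⟩
    apply Nat.mem_rfind.mpr
    constructor
    · simp [Nat.find_spec (hEx b)]
    · intro m hm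
      have h := Nat.find_min (hEx b) hm
      simp only [ne_eq, not_not] at h
      simp [h]
  -- the sequence x
  set x : ℕ → ℕ := fun n =>
    Nat.rec (motive := fun _ => ℕ) (g 0) (fun _ ih => g (max ih (k ih))) n with hx_def
  have hxsucc : ∀ n, x (n + 1) = g (max (x n) (k (x n))) := fun n => rfl
  have hxc : Computable x := by
    have hmaxc : Computable₂ (@max ℕ _) := Primrec.nat_max.to_comp
    have hh : Computable₂ fun (_ : ℕ) (p : ℕ × ℕ) => g (max p.2 (k p.2)) :=
      (hgc.comp (hmaxc.comp (Computable.snd.comp Computable.snd)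
        (hk.comp (Computable.snd.comp Computable.snd)))).to₂
    have := Computable.nat_rec (f := fun n : ℕ => n) (g := fun _ : ℕ => g 0)
      (h := fun _ (p : ℕ × ℕ) => g (max p.2 (k p.2))) Computable.id (Computable.const (g 0)) hh
    exact this.of_eq fun n => rfl
  have hxE : ∀ n, k (x n) ≠ x n := by
    intro n; cases n with
    | zero => exact hgk 0
    | succ n => exact hgk _
  have hxlt : ∀ n, x n < x (n + 1) ∧ k (x n) < x (n + 1) := by
    intro n
    have h := hgb (max (x n) (k (x n)))
    rw [← hxsucc n] at h
    exact ⟨lt_of_le_of_lt (le_max_left _ _) h, lt_of_le_of_lt (le_max_right _ _) h⟩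
  have hxsm : StrictMono x := strictMono_nat_of_lt_succ fun n => (hxlt n).1
  have hbound : ∀ n i, i < n → x i < x n ∧ k (x i) < x n := by
    intro n
    induction n with
    | zero => intro i hi; omega
    | succ n ih =>
      intro i hi
      rcases Nat.lt_succ_iff_lt_or_eq.mp hi with h | rfl
      · obtain ⟨h1, h2⟩ := ih i h
        exact ⟨h1.trans (hxlt n).1, h2.trans (hxlt n).1⟩
      · exact hxlt i
  -- set identities
  have hU0 : {A : ℕ → Bool | ∀ i < 0, A (x i) = A (k (x i))} = Set.univ := by
    ext A; simp
  have hUsucc : ∀ n, {A : ℕ → Bool | ∀ i < n + 1, A (x i) = A (k (x i))}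
      = {A : ℕ → Bool | ∀ i < n, A (x i) = A (k (x i))} ∩ {A | A (x n) = A (k (x n))} := by
    intro n; ext A
    simp only [Set.mem_setOf_eq, Set.mem_inter_iff]
    constructor
    · intro h
      exact ⟨fun i hi => h i (hi.trans (Nat.lt_succ_self n)), h n (Nat.lt_succ_self n)⟩
    · rintro ⟨h1, h2⟩ i hi
      rcases Nat.lt_succ_iff_lt_or_eq.mp hi with h | rfl
      · exact h1 i h
      · exact h2
  -- clopen
  have hpair : ∀ a b : ℕ, IsClopen {A : ℕ → Bool | A a = A b} := by
    intro a b
    have h : {A : ℕ → Bool | A a = A b}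
        = (fun A : ℕ → Bool => (A a, A b)) ⁻¹' {p : Bool × Bool | p.1 = p.2} := rfl
    rw [h]
    exact (isClopen_discrete _).preimage ((continuous_apply a).prodMk (continuous_apply b))
  have hclopen : ∀ n, IsClopen {A : ℕ → Bool | ∀ i < n, A (x i) = A (k (x i))} := by
    intro n
    induction n with
    | zero => rw [hU0]; exact isClopen_univ
    | succ n ih => rw [hUsucc n]; exact ih.inter (hpair _ _)
  -- representation
  have key : ∀ n, ∃ T : Finset (List Bool), (∀ σ ∈ T, σ.length = x n) ∧
      ({A : ℕ → Bool | ∀ i < n, A (x i) = A (k (x i))} = ⋃ σ ∈ T, cylinder σ) ∧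
      T.card = 2 ^ (x n - n) := by
    intro n
    induction n with
    | zero =>
      refine ⟨Stmt11.extFin {[]} (x 0), ?_, ?_, ?_⟩
      · intro σ hσ
        have h := Stmt11.extFin_length (T := {[]}) (L := 0) (by simp) (x 0) σ hσ
        simpa using h
      · rw [hU0, Stmt11.extFin_biUnion]
        simp [Stmt11.cylinder_nil]
      · rw [Stmt11.extFin_card]; simp
    | succ n ih =>
      obtain ⟨T, hlen, hrep, hcard⟩ := ih
      set p := max (x n) (k (x n)) with hp
      set q := min (x n) (k (x n)) with hq
      have hqp : q < p := by
        rcases lt_or_gt_of_ne (hxE n) with h | h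
        · rw [hp, hq, max_eq_left h.le, min_eq_right h.le]; exact h
        · rw [hp, hq, max_eq_right h.le, min_eq_left h.le]; exact h
      have hxnp : x n ≤ p := le_max_left _ _
      have hpx : p < x (n + 1) := max_lt (hxlt n).1 (hxlt n).2
      have hxn : n ≤ x n := hxsm.le_apply
      set T1 := Stmt11.extFin T (p - x n) with hT1
      have hlen1 : ∀ σ ∈ T1, σ.length = p := by
        intro σ hσ
        have h := Stmt11.extFin_length hlen (p - x n) σ hσ
        omega
      have hrep1 : {A : ℕ → Bool | ∀ i < n, A (x i) = A (k (x i))} = ⋃ σ ∈ T1, cylinder σ := by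
        rw [hrep, hT1, Stmt11.extFin_biUnion]
      have hpairset : {A : ℕ → Bool | A p = A q} = {A : ℕ → Bool | A (x n) = A (k (x n))} := by
        rcases le_total (k (x n)) (x n) with h | h
        · rw [hp, hq, max_eq_left h, min_eq_right h]
        · rw [hp, hq, max_eq_right h, min_eq_left h]
          ext A; exact eq_comm
      set T2 := T1.image (fun σ => σ ++ [σ.getD q false]) with hT2
      have hlen2 : ∀ σ ∈ T2, σ.length = p + 1 := by
        intro σ hσ
        rw [hT2, Finset.mem_image] at hσ
        obtain ⟨τ, hτ, rfl⟩ := hσ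
        simp [hlen1 τ hτ]
      have hcard2 : T2.card = T1.card := by
        rw [hT2]
        apply Finset.card_image_of_injOn
        intro σ _ τ _ h
        exact (List.append_inj' h rfl).1
      have hrep2 : {A : ℕ → Bool | ∀ i < n + 1, A (x i) = A (k (x i))}
          = ⋃ σ ∈ T2, cylinder σ := by
        have hstep : (⋃ σ ∈ T1, cylinder σ) ∩ {A : ℕ → Bool | A p = A q}
            = ⋃ σ ∈ T1, cylinder (σ ++ [σ.getD q false]) := by
          rw [Set.iUnion₂_inter]
          exact Set.iUnion₂_congr fun σ hσ => Stmt11.cylinder_inter_eq (hlen1 σ hσ) hqp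
        rw [hUsucc n, ← hpairset, hrep1, hstep, hT2, Finset.set_biUnion_finset_image]
      set T3 := Stmt11.extFin T2 (x (n + 1) - (p + 1)) with hT3
      refine ⟨T3, ?_, ?_, ?_⟩
      · intro σ hσ
        have h := Stmt11.extFin_length hlen2 (x (n + 1) - (p + 1)) σ hσ
        omega
      · rw [hrep2, hT3, Stmt11.extFin_biUnion]
      · rw [hT3, Stmt11.extFin_card, hcard2, hT1, Stmt11.extFin_card, hcard, ← pow_add, ← pow_add]
        congr 1
        omega
  -- measure
  have hmeas : ∀ n, μ {A : ℕ → Bool | ∀ i < n, A (x i) = A (k (x i))}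
      = (1 / 2 : ENNReal) ^ n := by
    intro n
    obtain ⟨T, hlen, hrep, hcard⟩ := key n
    rw [hrep, Stmt11.measure_rep hμ T (x n) hlen, hcard]
    have hxn : n ≤ x n := hxsm.le_apply
    obtain ⟨a, ha⟩ : ∃ a, x n = a + n := ⟨x n - n, by omega⟩
    have ha' : x n - n = a := by omega
    rw [ha', ha, pow_add]
    push_cast
    have hone : (2 : ENNReal) ^ a * (1 / 2 : ENNReal) ^ a = 1 := by
      rw [← mul_pow, one_div, ENNReal.mul_inv_cancel (by norm_num) (by norm_num), one_pow]
    rw [← mul_assoc, hone, one_mul]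
  -- subset
  have hsubset : {A : ℕ → Bool | ∀ y, A y = A (k y)}
      ⊆ ⋂ n, {A : ℕ → Bool | ∀ i < n, A (x i) = A (k (x i))} := by
    intro A hA
    simp only [Set.mem_iInter, Set.mem_setOf_eq]
    intro n i _
    exact hA (x i)
  -- ML test
  set W : ℕ → List Bool → Prop := fun n σ =>
    σ.length = x n ∧ ∀ i < n, σ.getD (x i) false = σ.getD (k (x i)) false with hW
  have hrepW : ∀ n, {A : ℕ → Bool | ∀ i < n, A (x i) = A (k (x i))}
      = ⋃ σ ∈ {σ | W n σ}, cylinder σ := by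
    intro n
    ext A
    simp only [Set.mem_setOf_eq, Set.mem_iUnion]
    constructor
    · intro hA
      refine ⟨List.ofFn (fun i : Fin (x n) => A i), ⟨by simp, ?_⟩, ?_⟩
      · intro i hi
        have h1 : x i < x n := (hbound n i hi).1
        have h2 : k (x i) < x n := (hbound n i hi).2
        rw [List.getD_eq_getElem _ _ (by simpa using h1),
          List.getD_eq_getElem _ _ (by simpa using h2)]
        simpa using hA i hi
      · intro i hi
        simp only [List.length_ofFn] at hi
        rw [List.getD_eq_getElem _ _ (by simpa using hi)]
        simp
    · rintro ⟨σ, ⟨hlen, hcons⟩, hmem⟩ i hi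
      have h1 : x i < σ.length := by rw [hlen]; exact (hbound n i hi).1
      have h2 : k (x i) < σ.length := by rw [hlen]; exact (hbound n i hi).2
      rw [hmem (x i) h1, hmem (k (x i)) h2]
      exact hcons i hi
  have hre : REPred (fun p : ℕ × List Bool => W p.1 p.2) := by
    set f : ℕ × List Bool → Bool := fun p =>
      (p.2.length == x p.1) &&
        (Nat.rec (motive := fun _ => Bool) true
          (fun i ih => ih && (p.2.getD (x i) false == p.2.getD (k (x i)) false)) p.1) with hf_def
    have haux : ∀ (σ : List Bool) (n : ℕ),
        (Nat.rec (motive := fun _ => Bool) true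
          (fun i ih => ih && (σ.getD (x i) false == σ.getD (k (x i)) false)) n = true)
        ↔ ∀ i < n, σ.getD (x i) false = σ.getD (k (x i)) false := by
      intro σ n
      induction n with
      | zero => simp
      | succ n ih =>
        show (_ && _) = true ↔ _
        rw [Bool.and_eq_true, ih, beq_iff_eq]
        constructor
        · rintro ⟨h1, h2⟩ i hi
          rcases Nat.lt_succ_iff_lt_or_eq.mp hi with h | rfl
          · exact h1 i h
          · exact h2
        · intro h
          exact ⟨fun i hi => h i (hi.trans (Nat.lt_succ_self n)), h n (Nat.lt_succ_self n)⟩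
    have hfc : Computable f := by
      have hlenc : Computable fun p : ℕ × List Bool => p.2.length :=
        Primrec.list_length.to_comp.comp Computable.snd
      have hxc1 : Computable fun p : ℕ × List Bool => x p.1 := hxc.comp Computable.fst
      have hbeqN : Computable₂ fun a b : ℕ => a == b := Primrec.beq.to_comp
      have hbeqB : Computable₂ fun a b : Bool => a == b := Primrec.beq.to_comp
      have handc : Computable₂ fun a b : Bool => a && b := Primrec.and.to_comp
      have hgetD : Computable₂ fun (l : List Bool) (n : ℕ) => l.getD n false :=
        (Primrec.list_getD false).to_comp
      have hh : Computable₂ fun (p : ℕ × List Bool) (q : ℕ × Bool) =>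
          q.2 && (p.2.getD (x q.1) false == p.2.getD (k (x q.1)) false) := by
        have hi : Computable fun r : (ℕ × List Bool) × (ℕ × Bool) => r.2.1 :=
          Computable.fst.comp Computable.snd
        have hl : Computable fun r : (ℕ × List Bool) × (ℕ × Bool) => r.1.2 :=
          Computable.snd.comp Computable.fst
        have hq2 : Computable fun r : (ℕ × List Bool) × (ℕ × Bool) => r.2.2 :=
          Computable.snd.comp Computable.snd
        have he1 : Computable fun r : (ℕ × List Bool) × (ℕ × Bool) =>
            r.1.2.getD (x r.2.1) false := hgetD.comp hl (hxc.comp hi)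
        have he2 : Computable fun r : (ℕ × List Bool) × (ℕ × Bool) =>
            r.1.2.getD (k (x r.2.1)) false := hgetD.comp hl (hk.comp (hxc.comp hi))
        exact (handc.comp hq2 (hbeqB.comp he1 he2)).to₂
      have hauxc : Computable fun p : ℕ × List Bool =>
          (Nat.rec (motive := fun _ => Bool) true
            (fun i ih => ih && (p.2.getD (x i) false == p.2.getD (k (x i)) false)) p.1) := by
        have := Computable.nat_rec (f := fun p : ℕ × List Bool => p.1)
          (g := fun _ : ℕ × List Bool => true)
          (h := fun (p : ℕ × List Bool) (q : ℕ × Bool) =>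
            q.2 && (p.2.getD (x q.1) false == p.2.getD (k (x q.1)) false))
          Computable.fst (Computable.const true) hh
        exact this.of_eq fun p => rfl
      exact handc.comp (hbeqN.comp hlenc hxc1) hauxc
    have heq : (fun p : ℕ × List Bool => W p.1 p.2) = fun p => (f p : Prop) := by
      funext p
      simp only [hW, hf_def, Bool.and_eq_true, beq_iff_eq, haux p.2 p.1, eq_iff_iff]
    exact ComputablePred.to_re (ComputablePred.computable_iff.mpr ⟨f, hfc, heq⟩)
  exact ⟨x, hxc, hxsm, hxE, hbound, hclopen, hmeas, hsubset,
    ⟨⟨W, hre, hrepW⟩, fun n => le_of_eq (hmeas n)⟩⟩
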